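/- Let 𝔤 be a finite-dimensional real Lie algebra with nondegenerate invariant symmetric bilinear form ⟨·,·⟩ and orthonormal basis e₁,…,eₙ. Let l : 𝔤⊗𝔤 → 𝔤 be induced by the bracket, l(x⊗y) = [x,y], and let I : 𝔤⊗𝔤 → ℝ be induced by the bilinear form, I(x⊗y) = ⟨x,y⟩. Then for all antisymmetric tensors a = eᵢ⊗eⱼ − eⱼ⊗eᵢ and b = e_k⊗e_l − e_l⊗e_k: Tr⊠²(a ⊗ b ⊗ Σₙ eₙ⊗eₙ) = (1/2)·I(l(a) ⊗ l(b)), where Tr⊠²((x₁⊗y₁)⊗(x₂⊗y₂)⊗(x₃⊗y₃)) = ⟨[x₁,x₂],x₃⟩·⟨[y₁,y₂],y₃⟩. -/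

import Mathlib

open TensorProduct

/-- On antisymmetric tensors `a = eᵢ⊗eⱼ − eⱼ⊗eᵢ`, `b = e_k⊗e_l − e_l⊗e_k`,
`Tr⊠²(a ⊗ b ⊗ Σₙ eₙ⊗eₙ) = (1/2)·I(l(a) ⊗ l(b))`. -/
theorem trBoxSq_eq_half_I_l {𝔤 : Type*} [LieRing 𝔤] [LieAlgebra ℝ 𝔤]
    [Module.Finite ℝ 𝔤] {n : ℕ} (B : LinearMap.BilinForm ℝ 𝔤)
    (hsymm : ∀ a b : 𝔤, B a b = B b a) (hnd : B.Nondegenerate)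
    (hinv : ∀ a b c : 𝔤, B ⁅a, b⁆ c = B a ⁅b, c⁆)
    (e : Module.Basis (Fin n) ℝ 𝔤)
    (horth : ∀ i j, B (e i) (e j) = if i = j then 1 else 0)
    (l : TensorProduct ℝ 𝔤 𝔤 →ₗ[ℝ] 𝔤) (hl : ∀ x y : 𝔤, l (x ⊗ₜ[ℝ] y) = ⁅x, y⁆)
    (I : TensorProduct ℝ 𝔤 𝔤 →ₗ[ℝ] ℝ) (hI : ∀ x y : 𝔤, I (x ⊗ₜ[ℝ] y) = B x y)
    (Φ : TensorProduct ℝ (TensorProduct ℝ 𝔤 𝔤)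
      (TensorProduct ℝ (TensorProduct ℝ 𝔤 𝔤) (TensorProduct ℝ 𝔤 𝔤)) →ₗ[ℝ] ℝ)
    (hΦ : ∀ x₁ y₁ x₂ y₂ x₃ y₃ : 𝔤,
      Φ ((x₁ ⊗ₜ[ℝ] y₁) ⊗ₜ[ℝ] ((x₂ ⊗ₜ[ℝ] y₂) ⊗ₜ[ℝ] (x₃ ⊗ₜ[ℝ] y₃)))
        = B ⁅x₁, x₂⁆ x₃ * B ⁅y₁, y₂⁆ y₃)
    (i j k m : Fin n) :
    Φ ((e i ⊗ₜ[ℝ] e j - e j ⊗ₜ[ℝ] e i) ⊗ₜ[ℝ]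
        ((e k ⊗ₜ[ℝ] e m - e m ⊗ₜ[ℝ] e k) ⊗ₜ[ℝ] (∑ p, e p ⊗ₜ[ℝ] e p)))
      = (1 / 2) * I (l (e i ⊗ₜ[ℝ] e j - e j ⊗ₜ[ℝ] e i)
          ⊗ₜ[ℝ] l (e k ⊗ₜ[ℝ] e m - e m ⊗ₜ[ℝ] e k)) := by
  -- orthonormal expansion: ∑ₚ B x eₚ * B y eₚ = B x y
  have hrepr : ∀ (y : 𝔤) (p : Fin n), B y (e p) = e.repr y p := by
    intro y p
    conv_lhs => rw [← e.sum_repr y]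
    simp [Finset.sum_apply, horth, hsymm (e p), -Module.Basis.sum_repr]
  have hsum : ∀ x y : 𝔤, ∑ p, B x (e p) * B y (e p) = B x y := by
    intro x y
    conv_rhs => rw [← e.sum_repr y]
    simp [hrepr, mul_comm, -Module.Basis.sum_repr]
  -- the key bracket identity
  have key : ∀ a b c d : 𝔤,
      B ⁅a, c⁆ ⁅b, d⁆ - B ⁅a, d⁆ ⁅b, c⁆ = B ⁅a, b⁆ ⁅c, d⁆ := by
    intro a b c d
    have h1 : B ⁅a, b⁆ ⁅c, d⁆ = B a ⁅b, ⁅c, d⁆⁆ := hinv a b ⁅c, d⁆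
    have h2 : ⁅b, ⁅c, d⁆⁆ = ⁅⁅b, c⁆, d⁆ + ⁅c, ⁅b, d⁆⁆ := by
      rw [leibniz_lie]
    have h3 : B a ⁅⁅b, c⁆, d⁆ = - B ⁅a, d⁆ ⁅b, c⁆ := by
      rw [← hinv a ⁅b, c⁆ d, ← lie_skew a ⁅b,c⁆, map_neg, LinearMap.neg_apply,
        hinv, hsymm]
    have h4 : B a ⁅c, ⁅b, d⁆⁆ = B ⁅a, c⁆ ⁅b, d⁆ := (hinv a c ⁅b, d⁆).symm
    rw [h1, h2, map_add, h3, h4]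
    ring
  simp only [sub_tmul, tmul_sub, tmul_sum, sum_tmul, map_sum, map_sub, hΦ, hl, hI]
  simp only [Finset.sum_sub_distrib, hsum]
  rw [← lie_skew (e j) (e i), ← lie_skew (e m) (e k)]
  have hii := key (e i) (e j) (e k) (e m)
  have h2 := key (e j) (e i) (e k) (e m)
  simp only [map_neg, LinearMap.neg_apply, map_sub, LinearMap.sub_apply]
  nlinarith [key (e i) (e j) (e k) (e m), hsymm ⁅e i, e k⁆ ⁅e j, e m⁆,
    hsymm ⁅e i, e m⁆ ⁅e j, e k⁆]
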